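/- Fix α ∈ (0,1), a > 0, T ∈ ℕ with T ≥ 1, real numbers A ≤ B, outcomes y_1, …, y_T ∈ [A, B], and vectors x_1, …, x_T ∈ ℝ^{p+1} with ‖x_t‖_∞ ≤ max(1, B) for all t. Let L̃_T^θ = Σ_{t=1}^{T} λ_α(y_t, min(max(x_t'θ, A), B)) and J̃_T(θ) = L̃_T^θ/√T + a‖θ‖₁; let L_T^{θ₀} = Σ_{t=1}^{T} λ_α(y_t, x_t'θ₀) and J_T(θ₀) = L_T^{θ₀}/√T + a‖θ₀‖₁; and set b_T = √T·max(1, B) + a. Then for every θ₀ ∈ ℝ^{p+1}, the Lebesgue integral ∫_{ℝ^{p+1}} exp(−J̃_T(θ)) dθ ≥ exp(−J_T(θ₀))·(2/b_T)^{p+1}. -/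

import Mathlib

open MeasureTheory

/-- The pinball loss at level `α`: `λ_α(y, γ) = α(y − γ)` if `y ≥ γ` and
`(1 − α)(γ − y)` if `y < γ`. -/
noncomputable def pinball (α y γ : ℝ) : ℝ :=
  if γ ≤ y then α * (y - γ) else (1 - α) * (γ - y)

open Set in
lemma integrable_exp_neg_mul_abs' {b : ℝ} (hb : 0 < b) :
    Integrable (fun x : ℝ => Real.exp (-(b * |x|))) := by
  have hIoi : IntegrableOn (fun x : ℝ => Real.exp (-(b * |x|))) (Ioi 0) := by
    refine (exp_neg_integrableOn_Ioi 0 hb).congr_fun (fun x hx => ?_) measurableSet_Ioi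
    rw [abs_of_pos hx]; ring_nf
  have hIic : IntegrableOn (fun x : ℝ => Real.exp (-(b * |x|))) (Iic 0) := by
    rw [← Measure.map_neg_eq_self (volume : Measure ℝ)]
    have m : MeasurableEmbedding fun x : ℝ => -x := (Homeomorph.neg ℝ).measurableEmbedding
    rw [m.integrableOn_map_iff]
    simp_rw [Function.comp_def, abs_neg, neg_preimage, neg_Iic, neg_zero]
    exact Iff.mpr integrableOn_Ici_iff_integrableOn_Ioi hIoi
  have := hIic.union hIoi
  rwa [Iic_union_Ioi, integrableOn_univ] at this

open Set in
lemma integral_exp_neg_mul_abs' {b : ℝ} (hb : 0 < b) :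
    ∫ x : ℝ, Real.exp (-(b * |x|)) = 2 / b := by
  have h1 : ∫ x : ℝ, Real.exp (-(b * |x|)) = 2 * ∫ x in Ioi (0:ℝ), Real.exp (-(b * x)) :=
    integral_comp_abs (f := fun x => Real.exp (-(b * x)))
  have h2 : ∫ x in Ioi (0:ℝ), Real.exp (-(b * x))
      = b⁻¹ • ∫ x in Ioi (b * 0), Real.exp (-x) :=
    integral_comp_mul_left_Ioi (fun x => Real.exp (-x)) 0 hb
  rw [h1, h2, mul_zero, integral_exp_neg_Ioi, neg_zero, Real.exp_zero, smul_eq_mul, mul_one]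
  ring

lemma integrable_exp_neg_mul_abs_sub {b : ℝ} (hb : 0 < b) (c : ℝ) :
    Integrable (fun x : ℝ => Real.exp (-(b * |x - c|))) :=
  (integrable_exp_neg_mul_abs' hb).comp_sub_right c

lemma integral_exp_neg_mul_abs_sub {b : ℝ} (hb : 0 < b) (c : ℝ) :
    ∫ x : ℝ, Real.exp (-(b * |x - c|)) = 2 / b := by
  rw [integral_sub_right_eq_self (fun x => Real.exp (-(b * |x|))) c]
  exact integral_exp_neg_mul_abs' hb

lemma pinball_eq_max {α : ℝ} (hα : α ∈ Set.Ioo (0:ℝ) 1) (y γ : ℝ) :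
    pinball α y γ = max (α * (y - γ)) ((1 - α) * (γ - y)) := by
  obtain ⟨h0, h1⟩ := hα
  unfold pinball
  rcases le_or_gt γ y with h | h
  · rw [if_pos h, max_eq_left]; nlinarith
  · rw [if_neg (not_le.mpr h), max_eq_right]; nlinarith

lemma pinball_nonneg {α : ℝ} (hα : α ∈ Set.Ioo (0:ℝ) 1) (y γ : ℝ) :
    0 ≤ pinball α y γ := by
  obtain ⟨h0, h1⟩ := hα
  unfold pinball
  split <;> nlinarith

lemma pinball_lipschitz {α : ℝ} (hα : α ∈ Set.Ioo (0:ℝ) 1) (y γ γ' : ℝ) :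
    pinball α y γ ≤ pinball α y γ' + |γ - γ'| := by
  obtain ⟨h0, h1⟩ := hα
  rw [pinball_eq_max ⟨h0, h1⟩, pinball_eq_max ⟨h0, h1⟩]
  have hd : γ' - γ ≤ |γ - γ'| := by rw [abs_sub_comm]; exact le_abs_self _
  have hd' : γ - γ' ≤ |γ - γ'| := le_abs_self _
  apply max_le
  · have : α * (y - γ) ≤ α * (y - γ') + |γ - γ'| := by nlinarith
    exact this.trans (by gcongr; exact le_max_left _ _)
  · have : (1 - α) * (γ - y) ≤ (1 - α) * (γ' - y) + |γ - γ'| := by nlinarith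
    exact this.trans (by gcongr; exact le_max_right _ _)

lemma pinball_clamp_le {α A B : ℝ} (hα : α ∈ Set.Ioo (0:ℝ) 1) {y : ℝ}
    (hy : y ∈ Set.Icc A B) (γ : ℝ) :
    pinball α (y) (min (max γ A) B) ≤ pinball α y γ := by
  obtain ⟨h0, h1⟩ := hα
  obtain ⟨hA, hB⟩ := hy
  unfold pinball
  rcases le_total γ A with hga | hga
  · rw [max_eq_right hga, min_eq_left (hA.trans hB), if_pos hA, if_pos (hga.trans hA)]
    nlinarith
  · rw [max_eq_left hga]
    rcases le_total γ B with hgb | hgb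
    · rw [min_eq_left hgb]
    · rw [min_eq_right hgb]
      rcases le_or_gt γ y with hgy | hgy
      · have hgB : γ = B := le_antisymm (hgy.trans hB) hgb
        subst hgB
        exact le_refl _
      · rw [if_neg (not_le.mpr hgy)]
        rcases le_or_gt B y with hBy | hBy
        · have : B = y := le_antisymm hBy hB
          rw [if_pos hBy]; nlinarith
        · rw [if_neg (not_le.mpr hBy)]; nlinarith

lemma continuous_pinball {α : ℝ} (hα : α ∈ Set.Ioo (0:ℝ) 1) (y : ℝ) :
    Continuous (pinball α y) := by
  have : pinball α y = fun γ => max (α * (y - γ)) ((1 - α) * (γ - y)) := by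
    ext γ; exact pinball_eq_max hα y γ
  rw [this]
  fun_prop

theorem integral_exp_neg_truncated_potential_ge {p : ℕ} (α a A B : ℝ)
    (hα : α ∈ Set.Ioo (0 : ℝ) 1) (ha : 0 < a) (hAB : A ≤ B)
    (T : ℕ) (hT : 1 ≤ T)
    (y : ℕ → ℝ) (hy : ∀ t ∈ Finset.Icc 1 T, y t ∈ Set.Icc A B)
    (x : ℕ → Fin (p + 1) → ℝ)
    (hx : ∀ t ∈ Finset.Icc 1 T, ∀ i, |x t i| ≤ max 1 B)
    (θ₀ : Fin (p + 1) → ℝ) :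
    ∫ θ : Fin (p + 1) → ℝ,
        Real.exp (-((∑ t ∈ Finset.Icc 1 T,
            pinball α (y t) (min (max (∑ i, x t i * θ i) A) B)) / Real.sqrt T
          + a * ∑ i, |θ i|))
      ≥ Real.exp (-((∑ t ∈ Finset.Icc 1 T,
            pinball α (y t) (∑ i, x t i * θ₀ i)) / Real.sqrt T
          + a * ∑ i, |θ₀ i|))
        * (2 / (Real.sqrt T * max 1 B + a)) ^ (p + 1) := by
  have hsT : 0 < Real.sqrt T := Real.sqrt_pos.mpr (by exact_mod_cast Nat.lt_of_lt_of_le Nat.zero_lt_one hT)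
  have hM1 : (1:ℝ) ≤ max 1 B := le_max_left _ _
  set M : ℝ := max 1 B with hMdef
  have hM0 : (0:ℝ) < M := lt_of_lt_of_le one_pos hM1
  set b : ℝ := Real.sqrt T * M + a with hbdef
  have hb0 : 0 < b := by positivity
  set J₀ : ℝ := (∑ t ∈ Finset.Icc 1 T,
      pinball α (y t) (∑ i, x t i * θ₀ i)) / Real.sqrt T + a * ∑ i, |θ₀ i| with hJ₀def
  -- the pointwise key inequality
  have key : ∀ θ : Fin (p + 1) → ℝ,
      (∑ t ∈ Finset.Icc 1 T,
          pinball α (y t) (min (max (∑ i, x t i * θ i) A) B)) / Real.sqrt T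
        + a * ∑ i, |θ i|
      ≤ J₀ + b * ∑ i, |θ i - θ₀ i| := by
    intro θ
    set d : ℝ := ∑ i, |θ i - θ₀ i| with hddef
    have hd0 : 0 ≤ d := Finset.sum_nonneg fun i _ => abs_nonneg _
    have hstep : ∀ t ∈ Finset.Icc 1 T,
        pinball α (y t) (min (max (∑ i, x t i * θ i) A) B)
          ≤ pinball α (y t) (∑ i, x t i * θ₀ i) + M * d := by
      intro t ht
      have h1 := pinball_lipschitz hα (y t) (min (max (∑ i, x t i * θ i) A) B)
        (min (max (∑ i, x t i * θ₀ i) A) B)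
      have h2 := pinball_clamp_le hα (hy t ht) (∑ i, x t i * θ₀ i)
      have h3 : |min (max (∑ i, x t i * θ i) A) B - min (max (∑ i, x t i * θ₀ i) A) B|
          ≤ |(∑ i, x t i * θ i) - ∑ i, x t i * θ₀ i| := by
        refine (abs_min_sub_min_le_max _ _ _ _).trans
          (max_le (abs_max_sub_max_le_abs _ _ _) ?_)
        simp [abs_nonneg]
      have h4 : |(∑ i, x t i * θ i) - ∑ i, x t i * θ₀ i| ≤ M * d := by
        rw [← Finset.sum_sub_distrib]
        refine (Finset.abs_sum_le_sum_abs _ _).trans ?_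
        rw [hddef, Finset.mul_sum]
        refine Finset.sum_le_sum fun i _ => ?_
        rw [← mul_sub, abs_mul]
        exact mul_le_mul_of_nonneg_right (hx t ht i) (abs_nonneg _)
      linarith
    have hsum : (∑ t ∈ Finset.Icc 1 T,
          pinball α (y t) (min (max (∑ i, x t i * θ i) A) B))
        ≤ (∑ t ∈ Finset.Icc 1 T, pinball α (y t) (∑ i, x t i * θ₀ i)) + T * (M * d) := by
      calc _ ≤ ∑ t ∈ Finset.Icc 1 T,
            (pinball α (y t) (∑ i, x t i * θ₀ i) + M * d) := Finset.sum_le_sum hstep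
        _ = _ := by
          rw [Finset.sum_add_distrib, Finset.sum_const, Nat.card_Icc, nsmul_eq_mul]
          norm_num
    have habs : ∑ i, |θ i| ≤ (∑ i, |θ₀ i|) + d := by
      rw [hddef, ← Finset.sum_add_distrib]
      refine Finset.sum_le_sum fun i _ => ?_
      calc |θ i| = |θ₀ i + (θ i - θ₀ i)| := by ring_nf
        _ ≤ |θ₀ i| + |θ i - θ₀ i| := abs_add_le _ _
    have hTs : (T:ℝ) = Real.sqrt T * Real.sqrt T :=
      (Real.mul_self_sqrt (by positivity)).symm
    have hdiv : (∑ t ∈ Finset.Icc 1 T,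
          pinball α (y t) (min (max (∑ i, x t i * θ i) A) B)) / Real.sqrt T
        ≤ (∑ t ∈ Finset.Icc 1 T,
            pinball α (y t) (∑ i, x t i * θ₀ i)) / Real.sqrt T
          + Real.sqrt T * (M * d) := by
      calc _ ≤ ((∑ t ∈ Finset.Icc 1 T,
            pinball α (y t) (∑ i, x t i * θ₀ i)) + T * (M * d)) / Real.sqrt T := by
            gcongr
        _ = _ := by
            rw [add_div]
            congr 1
            rw [div_eq_iff hsT.ne']
            linear_combination M * d * hTs
    have hexp : b * d = Real.sqrt T * (M * d) + a * d := by rw [hbdef]; ring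
    rw [hJ₀def]
    nlinarith [mul_le_mul_of_nonneg_left habs ha.le]
  -- integrability of the integrand
  have hfc : Continuous fun θ : Fin (p + 1) → ℝ =>
      Real.exp (-((∑ t ∈ Finset.Icc 1 T,
          pinball α (y t) (min (max (∑ i, x t i * θ i) A) B)) / Real.sqrt T
        + a * ∑ i, |θ i|)) := by
    refine Real.continuous_exp.comp (Continuous.neg (Continuous.add ?_ ?_))
    · refine Continuous.div_const (continuous_finset_sum _ fun t _ => ?_) _
      exact (continuous_pinball hα (y t)).comp
        (((continuous_finset_sum _ fun i _ =>
          continuous_const.mul (continuous_apply i)).max continuous_const).min continuous_const)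
    · exact continuous_const.mul (continuous_finset_sum _ fun i _ => (continuous_apply i).abs)
  have hfi : Integrable fun θ : Fin (p + 1) → ℝ =>
      Real.exp (-((∑ t ∈ Finset.Icc 1 T,
          pinball α (y t) (min (max (∑ i, x t i * θ i) A) B)) / Real.sqrt T
        + a * ∑ i, |θ i|)) := by
    refine Integrable.mono
      (Integrable.fintype_prod (f := fun (_ : Fin (p+1)) (u : ℝ) => Real.exp (-(a * |u|)))
        fun i => integrable_exp_neg_mul_abs' ha)
      hfc.aestronglyMeasurable ?_
    filter_upwards with θ
    rw [Real.norm_eq_abs, Real.norm_eq_abs, abs_of_pos (Real.exp_pos _),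
      abs_of_pos (Finset.prod_pos fun i _ => Real.exp_pos _)]
    rw [← Real.exp_sum]
    apply Real.exp_le_exp.mpr
    have h0 : 0 ≤ (∑ t ∈ Finset.Icc 1 T,
        pinball α (y t) (min (max (∑ i, x t i * θ i) A) B)) / Real.sqrt T := by
      apply div_nonneg _ hsT.le
      exact Finset.sum_nonneg fun t _ => pinball_nonneg hα _ _
    have : ∑ i, -(a * |θ i|) = -(a * ∑ i, |θ i|) := by
      rw [Finset.mul_sum]
      exact Finset.sum_neg_distrib _
    rw [this]
    linarith
  -- integrability and value of the lower-bound function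
  have hgi : Integrable fun θ : Fin (p + 1) → ℝ =>
      Real.exp (-J₀) * ∏ i, Real.exp (-(b * |θ i - θ₀ i|)) :=
    (Integrable.fintype_prod (f := fun i (u : ℝ) => Real.exp (-(b * |u - θ₀ i|)))
      fun i => integrable_exp_neg_mul_abs_sub hb0 (θ₀ i)).const_mul _
  have hle : ∀ θ : Fin (p + 1) → ℝ,
      Real.exp (-J₀) * ∏ i, Real.exp (-(b * |θ i - θ₀ i|))
        ≤ Real.exp (-((∑ t ∈ Finset.Icc 1 T,
            pinball α (y t) (min (max (∑ i, x t i * θ i) A) B)) / Real.sqrt T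
          + a * ∑ i, |θ i|)) := by
    intro θ
    have : Real.exp (-J₀) * ∏ i, Real.exp (-(b * |θ i - θ₀ i|))
        = Real.exp (-(J₀ + b * ∑ i, |θ i - θ₀ i|)) := by
      rw [← Real.exp_sum, ← Real.exp_add]
      congr 1
      rw [Finset.mul_sum, Finset.sum_neg_distrib]
      ring
    rw [this]
    exact Real.exp_le_exp.mpr (by linarith [key θ])
  calc ∫ θ : Fin (p + 1) → ℝ,
        Real.exp (-((∑ t ∈ Finset.Icc 1 T,
            pinball α (y t) (min (max (∑ i, x t i * θ i) A) B)) / Real.sqrt T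
          + a * ∑ i, |θ i|))
      ≥ ∫ θ : Fin (p + 1) → ℝ,
          Real.exp (-J₀) * ∏ i, Real.exp (-(b * |θ i - θ₀ i|)) :=
        integral_mono hgi hfi hle
    _ = Real.exp (-J₀) * ∫ θ : Fin (p + 1) → ℝ,
          ∏ i, Real.exp (-(b * |θ i - θ₀ i|)) := integral_const_mul _ _
    _ = Real.exp (-J₀) * ∏ i : Fin (p + 1), ∫ u : ℝ, Real.exp (-(b * |u - θ₀ i|)) := by
        rw [integral_fintype_prod_volume_eq_prod
          (fun i (u : ℝ) => Real.exp (-(b * |u - θ₀ i|)))]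
    _ = Real.exp (-J₀) * (2 / b) ^ (p + 1) := by
        simp_rw [fun i : Fin (p+1) => integral_exp_neg_mul_abs_sub hb0 (θ₀ i)]
        rw [Finset.prod_const, Finset.card_univ, Fintype.card_fin]
    _ = _ := rfl
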